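/- Let X and Y be nonempty finite T₀-spaces. The non-Hausdorff join X ⊕ Y is collapsible (as a finite space) if and only if X or Y is collapsible. -/

import Mathlib

/-!
STATEMENT 6: Let X and Y be nonempty finite T₀-spaces. The non-Hausdorff join X ⊕ Y is
collapsible (as a finite space) if and only if X or Y is collapsible.

A finite T₀-space is identified with a finite poset with the down-set topology; the
non-Hausdorff join is the ordered sum `X ⊕ₗ Y` (every point of X below every point of Y).
A point x of a finite space is a weak point if the subspace of points strictly below x or
the subspace of points strictly above x is contractible; collapsibility means reaching a
one-point space by successively removing weak points.
-/

noncomputable section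

/-- The Alexandrov "down-set" topology on a poset: open sets are the lower sets. -/
def downTop (X : Type*) [Preorder X] : TopologicalSpace X := Topology.lowerSet X

/-- A subset of a poset is contractible when, with the subspace topology coming from the
down-set topology, it is homotopy equivalent to a point. -/
def SubContractible {X : Type*} [Preorder X] (A : Set X) : Prop :=
  @ContractibleSpace A (TopologicalSpace.induced Subtype.val (downTop X))

/-- `x` is a weak point of the subspace `A`: the set of points of `A` strictly below `x`
or the set of points of `A` strictly above `x` is contractible. -/
def IsWeakPointIn {X : Type*} [PartialOrder X] (A : Set X) (x : X) : Prop :=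
  x ∈ A ∧ (SubContractible {y | y ∈ A ∧ y < x} ∨ SubContractible {y | y ∈ A ∧ x < y})

/-- Elementary collapse of finite spaces: removal of a single weak point. -/
def ElemSpaceCollapse {X : Type*} [PartialOrder X] (A B : Set X) : Prop :=
  ∃ x, IsWeakPointIn A x ∧ B = A \ {x}

/-- The finite space `A` collapses to `B`: a finite sequence of elementary collapses. -/
def SpaceCollapses {X : Type*} [PartialOrder X] (A B : Set X) : Prop :=
  Relation.ReflTransGen ElemSpaceCollapse A B

/-- The finite space `A` is collapsible: it collapses to a one-point subspace. -/
def SpaceCollapsible {X : Type*} [PartialOrder X] (A : Set X) : Prop :=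
  ∃ y ∈ A, SpaceCollapses A {y}

open Relation Topology

section CCtheory

variable {P Q : Type*}

/-- constant order hom -/
def cst [Preorder P] (c : P) : P →o P := ⟨fun _ => c, monotone_const⟩

/-- comparability of self-maps -/
def Cmp [Preorder P] (f g : P →o P) : Prop := f ≤ g ∨ g ≤ f

lemma Cmp.symm' [Preorder P] {f g : P →o P} (h : Cmp f g) : Cmp g f := Or.symm h

/-- combinatorial contractibility -/
def CC (P : Type*) [Preorder P] : Prop :=
  ∃ c : P, Relation.ReflTransGen Cmp OrderHom.id (cst c)

lemma CC.nonempty [Preorder P] (h : CC P) : Nonempty P := ⟨h.choose⟩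

lemma CC_of_top [Preorder P] (m : P) (hm : ∀ x, x ≤ m) : CC P :=
  ⟨m, ReflTransGen.single (Or.inl fun x => hm _)⟩

lemma CC_of_bot [Preorder P] (m : P) (hm : ∀ x, m ≤ x) : CC P :=
  ⟨m, ReflTransGen.single (Or.inr fun x => hm _)⟩

lemma CC_subsingleton [Preorder P] [Subsingleton P] (c : P) : CC P :=
  ⟨c, by
    have : OrderHom.id = cst c := by
      ext x; exact Subsingleton.elim _ _
    rw [this]⟩

lemma cmp_lift_ri [Preorder P] [Preorder Q] (r : P →o Q) (i : Q →o P) :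
    ∀ f g : P →o P, Cmp f g → Cmp ((r.comp f).comp i) ((r.comp g).comp i) := by
  intro f g hfg
  rcases hfg with h | h
  · exact Or.inl fun q => r.mono (h (i q))
  · exact Or.inr fun q => r.mono (h (i q))

lemma CC_retract [Preorder P] [Preorder Q] (r : P →o Q) (i : Q →o P)
    (h : ∀ q, r (i q) = q) : CC P → CC Q := by
  rintro ⟨c, hc⟩
  refine ⟨r c, ?_⟩
  have key : ReflTransGen Cmp ((r.comp OrderHom.id).comp i) ((r.comp (cst c)).comp i) :=
    ReflTransGen.lift (fun f : P →o P => (r.comp f).comp i) (cmp_lift_ri r i) _ _ hc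
  have e1 : (r.comp OrderHom.id).comp i = OrderHom.id := by ext q; exact h q
  have e2 : (r.comp (cst c)).comp i = cst (r c) := rfl
  rwa [e1, e2] at key

lemma CC_of_section [Preorder P] [Preorder Q] (i : Q →o P) (r : P →o Q)
    (hcmp : Cmp (i.comp r) OrderHom.id) : CC Q → CC P := by
  rintro ⟨c, hc⟩
  refine ⟨i c, ?_⟩
  have key : ReflTransGen Cmp ((i.comp OrderHom.id).comp r) ((i.comp (cst c)).comp r) :=
    ReflTransGen.lift (fun g : Q →o Q => (i.comp g).comp r) (cmp_lift_ri i r) _ _ hc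
  have e2 : (i.comp (cst c)).comp r = cst (i c) := rfl
  rw [e2] at key
  have step : ReflTransGen Cmp OrderHom.id ((i.comp OrderHom.id).comp r) :=
    ReflTransGen.single (Or.symm hcmp)
  exact step.trans key

lemma CC_iso [Preorder P] [Preorder Q] (e : P ≃o Q) : CC P → CC Q :=
  CC_retract ⟨e, e.monotone⟩ ⟨e.symm, e.symm.monotone⟩ (fun q => e.apply_symm_apply q)

lemma CC_iso_iff [Preorder P] [Preorder Q] (e : P ≃o Q) : CC P ↔ CC Q :=
  ⟨CC_iso e, CC_iso e.symm⟩

/-- down-beat point -/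
def IsDB [Preorder P] (x : P) : Prop := ∃ y, y < x ∧ ∀ z, z < x → z ≤ y
/-- up-beat point -/
def IsUB [Preorder P] (x : P) : Prop := ∃ y, x < y ∧ ∀ z, x < z → y ≤ z

lemma eq_id_of_le_id [PartialOrder P] [Finite P] (hb : ∀ x : P, ¬ IsDB x)
    (f : P →o P) (hf : f ≤ OrderHom.id) : f = OrderHom.id := by
  by_contra hne
  have hS : {x : P | f x ≠ x}.Nonempty := by
    by_contra h
    push_neg at h
    refine hne (OrderHom.ext _ _ (funext fun x => ?_))
    by_contra hx
    exact (Set.eq_empty_iff_forall_notMem.mp h) x hx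
  obtain ⟨x, hxS, hmin⟩ := Set.Finite.exists_minimalFor id _ (Set.toFinite _) hS
  have hfx : f x < x := lt_of_le_of_ne (hf x) hxS
  refine hb x ⟨f x, hfx, fun z hz => ?_⟩
  have hzS : f z = z := by
    by_contra hzne
    exact absurd (hmin hzne hz.le) hz.not_ge
  calc z = f z := hzS.symm
  _ ≤ f x := f.mono hz.le

lemma eq_id_of_id_le [PartialOrder P] [Finite P] (hb : ∀ x : P, ¬ IsUB x)
    (f : P →o P) (hf : OrderHom.id ≤ f) : f = OrderHom.id := by
  by_contra hne
  have hS : {x : P | f x ≠ x}.Nonempty := by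
    by_contra h
    push_neg at h
    refine hne (OrderHom.ext _ _ (funext fun x => ?_))
    by_contra hx
    exact (Set.eq_empty_iff_forall_notMem.mp h) x hx
  obtain ⟨x, hxS, hmax⟩ := Set.Finite.exists_maximalFor id _ (Set.toFinite _) hS
  have hfx : x < f x := lt_of_le_of_ne (hf x) (Ne.symm hxS)
  refine hb x ⟨f x, hfx, fun z hz => ?_⟩
  have hzS : f z = z := by
    by_contra hzne
    exact absurd (hmax hzne hz.le) hz.not_ge
  calc f x ≤ f z := f.mono hz.le
  _ = z := hzS

lemma exists_beat [PartialOrder P] [Finite P] (h : CC P) (hns : ¬ Subsingleton P) :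
    ∃ x : P, IsDB x ∨ IsUB x := by
  by_contra hb
  push_neg at hb
  obtain ⟨c, hc⟩ := h
  have key : ∀ g : P →o P, Relation.ReflTransGen Cmp OrderHom.id g → g = OrderHom.id := by
    intro g hg
    induction hg with
    | refl => rfl
    | tail _hab hbc ih =>
      subst ih
      rcases hbc with hle | hle
      · exact eq_id_of_id_le (fun x => (hb x).2) _ hle
      · exact eq_id_of_le_id (fun x => (hb x).1) _ hle
  have := key _ hc
  refine hns ⟨fun a b => ?_⟩
  have ha : a = c := (congrFun (congrArg (fun f : P →o P => (f : P → P)) this.symm) a)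
  have hbb : b = c := (congrFun (congrArg (fun f : P →o P => (f : P → P)) this.symm) b)
  rw [ha, hbb]

/-- removing a beat point preserves combinatorial contractibility -/
lemma CC_compl_iff [PartialOrder P] (x : P) (hx : IsDB x ∨ IsUB x) :
    CC P ↔ CC {z : P // z ≠ x} := by
  classical
  rcases hx with ⟨y, hyx, hy⟩ | ⟨y, hyx, hy⟩
  · have hrmono : Monotone (fun z : P => if h : z = x then (⟨y, hyx.ne⟩ : {z : P // z ≠ x})
        else ⟨z, h⟩) := by
      intro a b hab
      by_cases ha : a = x <;> by_cases hbx : b = x <;>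
        simp only [ha, hbx, dif_pos, dif_neg, Subtype.mk_le_mk]
      · exact le_refl _
      · subst ha; exact hyx.le.trans hab
      · subst hbx; exact hy a (lt_of_le_of_ne hab ha)
      · exact hab
    set r : P →o {z : P // z ≠ x} := ⟨_, hrmono⟩ with hr
    have hri : ∀ q : {z : P // z ≠ x}, r q.val = q := by
      intro q
      simp only [hr, OrderHom.coe_mk, dif_neg q.prop]
    set i : {z : P // z ≠ x} →o P := ⟨Subtype.val, fun a b hab => hab⟩ with hi
    have hcmp : Cmp (i.comp r) OrderHom.id := by
      refine Or.inl fun z => ?_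
      by_cases hz : z = x
      · show (r z).val ≤ z
        simp only [hr, OrderHom.coe_mk, dif_pos hz]
        exact hz ▸ hyx.le
      · show (r z).val ≤ z
        simp only [hr, OrderHom.coe_mk, dif_neg hz]; exact le_refl _
    exact ⟨CC_retract r i hri, CC_of_section i r hcmp⟩
  · have hrmono : Monotone (fun z : P => if h : z = x then (⟨y, hyx.ne'⟩ : {z : P // z ≠ x})
        else ⟨z, h⟩) := by
      intro a b hab
      by_cases ha : a = x <;> by_cases hbx : b = x <;>
        simp only [ha, hbx, dif_pos, dif_neg, Subtype.mk_le_mk]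
      · exact le_refl _
      · subst ha; exact hy b (lt_of_le_of_ne hab (Ne.symm hbx))
      · subst hbx; exact hab.trans hyx.le
      · exact hab
    set r : P →o {z : P // z ≠ x} := ⟨_, hrmono⟩ with hr
    have hri : ∀ q : {z : P // z ≠ x}, r q.val = q := by
      intro q
      simp only [hr, OrderHom.coe_mk, dif_neg q.prop]
    set i : {z : P // z ≠ x} →o P := ⟨Subtype.val, fun a b hab => hab⟩ with hi
    have hcmp : Cmp (i.comp r) OrderHom.id := by
      refine Or.inr fun z => ?_
      by_cases hz : z = x
      · show z ≤ (r z).val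
        simp only [hr, OrderHom.coe_mk, dif_pos hz]
        exact hz ▸ hyx.le
      · show z ≤ (r z).val
        simp only [hr, OrderHom.coe_mk, dif_neg hz]; exact le_refl _
    exact ⟨CC_retract r i hri, CC_of_section i r hcmp⟩

end CCtheory


section DownTop

variable {P Q : Type*} [Preorder P] [Preorder Q]

lemma isOpen_downTop {U : Set P} : IsOpen[downTop P] U ↔ IsLowerSet U := Iff.rfl

lemma continuous_of_monotone' {f : P → Q} (hf : Monotone f) :
    Continuous[downTop P, downTop Q] f := by
  rw [continuous_def]
  intro U hU
  exact (isOpen_downTop.mp hU).preimage hf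

lemma monotone_of_continuous' {f : P → Q} (hf : Continuous[downTop P, downTop Q] f) :
    Monotone f := by
  intro a b hab
  have hop : IsOpen[downTop P] (f ⁻¹' (Set.Iic (f b))) := by
    rw [continuous_def] at hf
    exact hf _ (isOpen_downTop.mpr (isLowerSet_Iic _))
  exact (isOpen_downTop.mp hop) hab (le_refl (f b) : f b ∈ Set.Iic (f b))

lemma induced_downTop (A : Set P) :
    TopologicalSpace.induced (Subtype.val : A → P) (downTop P) = downTop A := by
  refine TopologicalSpace.ext (funext fun S => propext ?_)
  constructor
  · rintro ⟨U, hU, rfl⟩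
    exact fun a b hab hb => (hU : IsLowerSet U) hab hb
  · intro hS
    refine ⟨(lowerClosure (Subtype.val '' S) : Set P), (lowerClosure _).lower, ?_⟩
    ext a
    simp only [Set.mem_preimage, SetLike.mem_coe, mem_lowerClosure]
    constructor
    · rintro ⟨p, ⟨b, hbS, rfl⟩, hle⟩
      exact hS (hle : a ≤ b) hbS
    · intro haS
      exact ⟨a.val, ⟨a, haS, rfl⟩, le_refl _⟩

end DownTop

section HomotopyPart

variable {P : Type*} [Preorder P]

/-- bundle an order hom as a continuous map for the down-set topologies -/
def ohCont (f : P →o P) : @ContinuousMap P P (downTop P) (downTop P) :=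
  @ContinuousMap.mk P P (downTop P) (downTop P) f (continuous_of_monotone' f.monotone)

lemma homotopic_of_le {f g : P →o P} (hfg : f ≤ g) :
    @ContinuousMap.Homotopic P P (downTop P) (downTop P) (ohCont f) (ohCont g) := by
  letI : TopologicalSpace P := downTop P
  refine ⟨⟨⟨fun p => if p.1 = 1 then g p.2 else f p.2, ?_⟩, ?_, ?_⟩⟩
  · rw [continuous_def]
    intro U hU
    have hUl : IsLowerSet U := hU
    have hpre : (fun p : unitInterval × P => if p.1 = 1 then g p.2 else f p.2) ⁻¹' U =
        ((Set.univ : Set unitInterval) ×ˢ (g ⁻¹' U)) ∪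
          (({1}ᶜ : Set unitInterval) ×ˢ (f ⁻¹' U)) := by
      ext ⟨t, x⟩
      by_cases ht : t = 1
      · subst ht
        simp
      · simp only [if_neg ht, Set.mem_preimage, Set.mem_union, Set.mem_prod, Set.mem_univ,
          true_and, Set.mem_compl_iff, Set.mem_singleton_iff, ht, not_false_iff, and_true]
        constructor
        · exact fun h => Or.inr h
        · rintro (h | h)
          · exact hUl (hfg x) h
          · exact h
    rw [hpre]
    exact (isOpen_univ.prod ((continuous_of_monotone' g.monotone).isOpen_preimage U hU)).union
      ((isOpen_compl_singleton).prod ((continuous_of_monotone' f.monotone).isOpen_preimage U hU))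
  · intro x
    have h01 : (0 : unitInterval) ≠ 1 := fun h => by
      have := congrArg (Subtype.val) h
      norm_num at this
    exact if_neg h01
  · intro x
    exact if_pos rfl

lemma homotopic_of_cmp {f g : P →o P} (h : Cmp f g) :
    @ContinuousMap.Homotopic P P (downTop P) (downTop P) (ohCont f) (ohCont g) := by
  letI : TopologicalSpace P := downTop P
  rcases h with h | h
  · exact homotopic_of_le h
  · exact (homotopic_of_le h).symm

theorem CC.contractible (h : CC P) : @ContractibleSpace P (downTop P) := by
  letI : TopologicalSpace P := downTop P
  obtain ⟨c, hc⟩ := h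
  rw [contractible_iff_id_nullhomotopic]
  refine ⟨c, ?_⟩
  have key : ∀ g : P →o P, Relation.ReflTransGen Cmp OrderHom.id g →
      (ohCont OrderHom.id).Homotopic (ohCont g) := by
    intro g hg
    induction hg with
    | refl => exact ContinuousMap.Homotopic.refl _
    | tail _ hbc ih => exact ih.trans (homotopic_of_cmp hbc)
  have h2 := key _ hc
  have e1 : ohCont (OrderHom.id : P →o P) = ContinuousMap.id P := by
    apply ContinuousMap.ext; intro x; rfl
  have e2 : ohCont (cst c) = ContinuousMap.const P c := by
    apply ContinuousMap.ext; intro x; rfl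
  rwa [e1, e2] at h2

theorem contractible_CC [Finite P] (h : @ContractibleSpace P (downTop P)) : CC P := by
  letI : TopologicalSpace P := downTop P
  obtain ⟨c, ⟨H⟩⟩ := (contractible_iff_id_nullhomotopic P).mp h
  letI : TopologicalSpace (P →o P) := downTop (P →o P)
  have hcont : ∀ t : unitInterval, Continuous fun x : P => H (t, x) := fun t =>
    H.continuous.comp (Continuous.prodMk_right t)
  set γ : unitInterval → (P →o P) := fun t => ⟨fun x => H (t, x),
    monotone_of_continuous' (hcont t)⟩ with hγdef
  have hγ : Continuous γ := by
    rw [continuous_def]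
    intro U hU
    have hUl : IsLowerSet U := hU
    rw [isOpen_iff_forall_mem_open]
    intro t₀ ht₀
    refine ⟨⋂ x : P, (fun t => H (t, x)) ⁻¹' (Set.Iic (H (t₀, x))), ?_, ?_, ?_⟩
    · intro t ht
      have hle : γ t ≤ γ t₀ := fun x => Set.mem_iInter.mp ht x
      exact hUl hle ht₀
    · refine isOpen_iInter_of_finite fun x => ?_
      have hc2 : Continuous fun t : unitInterval => H (t, x) :=
        H.continuous.comp (continuous_id.prodMk continuous_const)
      exact hc2.isOpen_preimage _ (isOpen_downTop.mpr (isLowerSet_Iic _))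
    · exact Set.mem_iInter.mpr fun x => le_refl _
  set K : Set (P →o P) := {g | Relation.ReflTransGen Cmp OrderHom.id g} with hK
  have hKopen : IsOpen K := by
    refine isOpen_downTop.mpr fun g h hle hg => ?_
    exact hg.tail (Or.inr hle)
  have hKclosed : IsClosed K := by
    rw [← isOpen_compl_iff]
    refine isOpen_downTop.mpr fun g h hle hg hmem => ?_
    exact hg (hmem.tail (Or.inl hle))
  have hpre : IsPreconnected (Set.range γ) := isPreconnected_range hγ
  have hid : γ 0 = OrderHom.id := by
    ext x
    exact H.apply_zero x
  have hcst : γ 1 = cst c := by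
    ext x
    exact H.apply_one x
  have hmem : γ 1 ∈ K := by
    refine hpre.subset_isClopen ⟨hKclosed, hKopen⟩ ⟨γ 0, ⟨0, rfl⟩, ?_⟩ ⟨1, rfl⟩
    rw [hid]
    exact Relation.ReflTransGen.refl
  exact ⟨c, by rwa [hcst] at hmem⟩

theorem contractible_iff_CC {P : Type*} [PartialOrder P] [Finite P] :
    @ContractibleSpace P (downTop P) ↔ CC P :=
  ⟨contractible_CC, CC.contractible⟩

end HomotopyPart

lemma subContr_iff_CC {X : Type*} [PartialOrder X] [Finite X] (A : Set X) :
    SubContractible A ↔ CC A := by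
  unfold SubContractible
  rw [induced_downTop]
  exact contractible_iff_CC

section SetLevel

variable {P : Type*} [PartialOrder P]

def isoDiff (S : Set P) (x : P) (hx : x ∈ S) :
    ↥(S \ {x}) ≃o {z : ↥S // z ≠ (⟨x, hx⟩ : ↥S)} where
  toFun a := ⟨⟨a.val, a.prop.1⟩, fun h => a.prop.2 (congrArg Subtype.val h)⟩
  invFun z := ⟨z.val.val, ⟨z.val.prop, fun h => z.prop (Subtype.ext h)⟩⟩
  left_inv a := rfl
  right_inv z := rfl
  map_rel_iff' := Iff.rfl

/-- set-level down-beat point -/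
def SDB (S : Set P) (x : P) : Prop :=
  x ∈ S ∧ ∃ y ∈ S, y < x ∧ ∀ z ∈ S, z < x → z ≤ y

/-- set-level up-beat point -/
def SUB (S : Set P) (x : P) : Prop :=
  x ∈ S ∧ ∃ y ∈ S, x < y ∧ ∀ z ∈ S, x < z → y ≤ z

lemma CC_diff_iff {S : Set P} {x : P} (h : SDB S x ∨ SUB S x) :
    CC ↥S ↔ CC ↥(S \ {x}) := by
  have hx : x ∈ S := by rcases h with h | h <;> exact h.1
  have hbeat : IsDB (⟨x, hx⟩ : ↥S) ∨ IsUB (⟨x, hx⟩ : ↥S) := by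
    rcases h with ⟨_, y, hyS, hyx, hmax⟩ | ⟨_, y, hyS, hyx, hmin⟩
    · exact Or.inl ⟨⟨y, hyS⟩, Subtype.mk_lt_mk.mpr hyx,
        fun z hz => Subtype.mk_le_mk.mpr (hmax z.val z.prop (Subtype.mk_lt_mk.mp hz))⟩
    · exact Or.inr ⟨⟨y, hyS⟩, Subtype.mk_lt_mk.mpr hyx,
        fun z hz => Subtype.mk_le_mk.mpr (hmin z.val z.prop (Subtype.mk_lt_mk.mp hz))⟩
  rw [CC_compl_iff _ hbeat]
  exact (CC_iso_iff (isoDiff S x hx)).symm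

lemma exists_sbeat [Finite P] {S : Set P} (h : CC ↥S)
    (h2 : ∃ a ∈ S, ∃ b ∈ S, a ≠ b) : ∃ x, SDB S x ∨ SUB S x := by
  obtain ⟨a, ha, b, hb, hab⟩ := h2
  have hns : ¬ Subsingleton ↥S := by
    intro hs
    exact hab (congrArg Subtype.val (hs.elim (⟨a, ha⟩ : ↥S) ⟨b, hb⟩))
  obtain ⟨⟨x, hx⟩, hbeat⟩ := exists_beat h hns
  refine ⟨x, ?_⟩
  rcases hbeat with ⟨⟨y, hyS⟩, hyx, hmax⟩ | ⟨⟨y, hyS⟩, hyx, hmin⟩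
  · exact Or.inl ⟨hx, y, hyS, Subtype.mk_lt_mk.mp hyx,
      fun z hz hzx => Subtype.mk_le_mk.mp (hmax ⟨z, hz⟩ (Subtype.mk_lt_mk.mpr hzx))⟩
  · exact Or.inr ⟨hx, y, hyS, Subtype.mk_lt_mk.mp hyx,
      fun z hz hzx => Subtype.mk_le_mk.mp (hmin ⟨z, hz⟩ (Subtype.mk_lt_mk.mpr hzx))⟩

lemma sbeat_weak {S : Set P} {x : P} [Finite P] (h : SDB S x ∨ SUB S x) :
    IsWeakPointIn S x := by
  rcases h with ⟨hx, y, hyS, hyx, hmax⟩ | ⟨hx, y, hyS, hyx, hmin⟩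
  · refine ⟨hx, Or.inl ?_⟩
    rw [subContr_iff_CC]
    exact CC_of_top (⟨y, hyS, hyx⟩ : ↥{z | z ∈ S ∧ z < x})
      (fun w => Subtype.mk_le_mk.mpr (hmax w.val w.prop.1 w.prop.2))
  · refine ⟨hx, Or.inr ?_⟩
    rw [subContr_iff_CC]
    exact CC_of_bot (⟨y, hyS, hyx⟩ : ↥{z | z ∈ S ∧ x < z})
      (fun w => Subtype.mk_le_mk.mpr (hmin w.val w.prop.1 w.prop.2))

theorem CC_toCollapsible [Finite P] :
    ∀ (n : ℕ) (S : Set P), S.ncard ≤ n → S.Nonempty → CC ↥S → SpaceCollapsible S := by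
  intro n
  induction n with
  | zero =>
    intro S hcard hne _
    rw [Nat.le_zero, Set.ncard_eq_zero (Set.toFinite S)] at hcard
    exact absurd hcard hne.ne_empty
  | succ n ih =>
    intro S hcard hne hCC
    by_cases hsub : ∃ a ∈ S, ∃ b ∈ S, a ≠ b
    · obtain ⟨x, hbeat⟩ := exists_sbeat hCC hsub
      have hx : x ∈ S := by rcases hbeat with h | h <;> exact h.1
      have helem : ElemSpaceCollapse S (S \ {x}) := ⟨x, sbeat_weak hbeat, rfl⟩
      have hCC' : CC ↥(S \ {x}) := (CC_diff_iff hbeat).mp hCC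
      have hne' : (S \ {x}).Nonempty := by
        obtain ⟨a, ha, b, hb, hab⟩ := hsub
        rcases eq_or_ne a x with rfl | h
        · exact ⟨b, hb, fun hbx => hab (hbx.symm ▸ rfl)⟩
        · exact ⟨a, ha, h⟩
      have hcard' : (S \ {x}).ncard ≤ n := by
        have := Set.ncard_diff_singleton_lt_of_mem hx (Set.toFinite S)
        omega
      obtain ⟨c, hc, hcoll⟩ := ih (S \ {x}) hcard' hne' hCC'
      exact ⟨c, hc.1, Relation.ReflTransGen.head helem hcoll⟩
    · push_neg at hsub
      obtain ⟨a, ha⟩ := hne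
      have : S = {a} := Set.eq_singleton_iff_unique_mem.mpr ⟨ha, fun b hb => hsub b hb a ha⟩
      exact ⟨a, ha, by rw [this]; exact Relation.ReflTransGen.refl⟩

lemma CC_spaceCollapsible [Finite P] {S : Set P} (hne : S.Nonempty) (h : CC ↥S) :
    SpaceCollapsible S :=
  CC_toCollapsible S.ncard S le_rfl hne h

end SetLevel

section JoinPart

variable {X Y : Type*} [PartialOrder X] [PartialOrder Y]

/-- the X-part of a subset of the join -/
def pA (S : Set (X ⊕ₗ Y)) : Set X := {x | toLex (Sum.inl x) ∈ S}
/-- the Y-part of a subset of the join -/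
def pB (S : Set (X ⊕ₗ Y)) : Set Y := {y | toLex (Sum.inr y) ∈ S}

lemma mem_pA {S : Set (X ⊕ₗ Y)} {x : X} : x ∈ pA S ↔ toLex (Sum.inl x) ∈ S := Iff.rfl
lemma mem_pB {S : Set (X ⊕ₗ Y)} {y : Y} : y ∈ pB S ↔ toLex (Sum.inr y) ∈ S := Iff.rfl

/-- case analysis on the join -/
def lexCases {C : X ⊕ₗ Y → Sort*} (f : ∀ x, C (toLex (Sum.inl x)))
    (g : ∀ y, C (toLex (Sum.inr y))) : ∀ w, C w := fun w =>
  Sum.rec (motive := fun s => C (toLex s)) f g (ofLex w)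

/-- if the Y-part is empty, S is order isomorphic to its X-part -/
def isoPA (S : Set (X ⊕ₗ Y)) (h : pB S = ∅) : ↥(pA S) ≃o ↥S := by
  refine ⟨Equiv.ofBijective (fun a => (⟨toLex (Sum.inl a.val), a.prop⟩ : ↥S)) ⟨?_, ?_⟩, ?_⟩
  · intro a b hab
    have := congrArg Subtype.val hab
    simp only [toLex_inj, Sum.inl.injEq] at this
    exact Subtype.ext this
  · rintro ⟨w, hw⟩
    rcases w with x | y
    · exact ⟨⟨x, hw⟩, rfl⟩
    · exact absurd (show y ∈ pB S from hw) (by rw [h]; exact Set.notMem_empty y)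
  · intro a b
    exact Sum.Lex.inl_le_inl_iff

/-- if the X-part is empty, S is order isomorphic to its Y-part -/
def isoPB (S : Set (X ⊕ₗ Y)) (h : pA S = ∅) : ↥(pB S) ≃o ↥S := by
  refine ⟨Equiv.ofBijective (fun a => (⟨toLex (Sum.inr a.val), a.prop⟩ : ↥S)) ⟨?_, ?_⟩, ?_⟩
  · intro a b hab
    have := congrArg Subtype.val hab
    simp only [toLex_inj, Sum.inr.injEq] at this
    exact Subtype.ext this
  · rintro ⟨w, hw⟩
    rcases w with x | y
    · exact absurd (show x ∈ pA S from hw) (by rw [h]; exact Set.notMem_empty x)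
    · exact ⟨⟨y, hw⟩, rfl⟩
  · intro a b
    exact Sum.Lex.inr_le_inr_iff

/-- lifting self-maps of the Y-part to self-maps of S -/
def liftB (S : Set (X ⊕ₗ Y)) (g : ↥(pB S) →o ↥(pB S)) : ↥S →o ↥S where
  toFun w := lexCases (C := fun w => w ∈ S → ↥S)
    (fun x hw => ⟨toLex (Sum.inl x), hw⟩)
    (fun y hw => ⟨toLex (Sum.inr (g ⟨y, hw⟩).val), (g ⟨y, hw⟩).prop⟩) w.val w.prop
  monotone' := by
    rintro ⟨w1, h1⟩ ⟨w2, h2⟩ hle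
    rcases w1 with x1 | y1 <;> rcases w2 with x2 | y2
    · exact hle
    · exact Sum.Lex.inl_le_inr _ _
    · exact absurd hle Sum.Lex.not_inr_le_inl
    · have h12 : y1 ≤ y2 :=
        Sum.Lex.inr_le_inr_iff.mp (show (toLex (Sum.inr y1) : X ⊕ₗ Y) ≤ toLex (Sum.inr y2) from hle)
      have h34 : (g ⟨y1, h1⟩).val ≤ (g ⟨y2, h2⟩).val := g.mono h12
      exact Sum.Lex.inr_le_inr_iff.mpr h34

lemma liftB_cmp (S : Set (X ⊕ₗ Y)) {f g : ↥(pB S) →o ↥(pB S)} (h : Cmp f g) :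
    Cmp (liftB S f) (liftB S g) := by
  rcases h with h | h
  · refine Or.inl ?_
    rintro ⟨w, hw⟩
    rcases w with x | y
    · exact le_refl _
    · exact Sum.Lex.inr_le_inr_iff.mpr (h ⟨y, hw⟩)
  · refine Or.inr ?_
    rintro ⟨w, hw⟩
    rcases w with x | y
    · exact le_refl _
    · exact Sum.Lex.inr_le_inr_iff.mpr (h ⟨y, hw⟩)

lemma liftB_id (S : Set (X ⊕ₗ Y)) : liftB S OrderHom.id = OrderHom.id := by
  apply OrderHom.ext
  funext w
  obtain ⟨w, hw⟩ := w
  rcases w with x | y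
  · rfl
  · rfl

/-- combinatorial contractibility of the Y-part gives it for all of S -/
lemma CC_of_pB {S : Set (X ⊕ₗ Y)} (h : CC ↥(pB S)) : CC ↥S := by
  obtain ⟨b0, hb0⟩ := h
  refine ⟨⟨toLex (Sum.inr b0.val), b0.prop⟩, ?_⟩
  have key : ReflTransGen Cmp (liftB S OrderHom.id) (liftB S (cst b0)) := Relation.ReflTransGen.lift (liftB S) (fun f g => liftB_cmp S) _ _ hb0
  rw [liftB_id] at key
  refine key.tail ?_
  refine Or.inl ?_
  rintro ⟨w, hw⟩
  rcases w with x | y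
  · exact Sum.Lex.inl_le_inr _ _
  · exact le_refl _

/-- lifting self-maps of the X-part to self-maps of S -/
def liftA (S : Set (X ⊕ₗ Y)) (g : ↥(pA S) →o ↥(pA S)) : ↥S →o ↥S where
  toFun w := lexCases (C := fun w => w ∈ S → ↥S)
    (fun x hw => ⟨toLex (Sum.inl (g ⟨x, hw⟩).val), (g ⟨x, hw⟩).prop⟩)
    (fun y hw => ⟨toLex (Sum.inr y), hw⟩) w.val w.prop
  monotone' := by
    rintro ⟨w1, h1⟩ ⟨w2, h2⟩ hle
    rcases w1 with x1 | y1 <;> rcases w2 with x2 | y2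
    · have h12 : x1 ≤ x2 :=
        Sum.Lex.inl_le_inl_iff.mp (show (toLex (Sum.inl x1) : X ⊕ₗ Y) ≤ toLex (Sum.inl x2) from hle)
      have h34 : (g ⟨x1, h1⟩).val ≤ (g ⟨x2, h2⟩).val := g.mono h12
      exact Sum.Lex.inl_le_inl_iff.mpr h34
    · exact Sum.Lex.inl_le_inr _ _
    · exact absurd hle Sum.Lex.not_inr_le_inl
    · exact hle

lemma liftA_cmp (S : Set (X ⊕ₗ Y)) {f g : ↥(pA S) →o ↥(pA S)} (h : Cmp f g) :
    Cmp (liftA S f) (liftA S g) := by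
  rcases h with h | h
  · refine Or.inl ?_
    rintro ⟨w, hw⟩
    rcases w with x | y
    · exact Sum.Lex.inl_le_inl_iff.mpr (h ⟨x, hw⟩)
    · exact le_refl _
  · refine Or.inr ?_
    rintro ⟨w, hw⟩
    rcases w with x | y
    · exact Sum.Lex.inl_le_inl_iff.mpr (h ⟨x, hw⟩)
    · exact le_refl _

lemma liftA_id (S : Set (X ⊕ₗ Y)) : liftA S OrderHom.id = OrderHom.id := by
  apply OrderHom.ext
  funext w
  obtain ⟨w, hw⟩ := w
  rcases w with x | y
  · rfl
  · rfl

/-- combinatorial contractibility of the X-part gives it for all of S -/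
lemma CC_of_pA {S : Set (X ⊕ₗ Y)} (h : CC ↥(pA S)) : CC ↥S := by
  obtain ⟨a0, ha0⟩ := h
  refine ⟨⟨toLex (Sum.inl a0.val), a0.prop⟩, ?_⟩
  have key : ReflTransGen Cmp (liftA S OrderHom.id) (liftA S (cst a0)) := Relation.ReflTransGen.lift (liftA S) (fun f g => liftA_cmp S) _ _ ha0
  rw [liftA_id] at key
  refine key.tail ?_
  refine Or.inr ?_
  rintro ⟨w, hw⟩
  rcases w with x | y
  · exact le_refl _
  · exact Sum.Lex.inl_le_inr _ _

lemma SDB_inl {S : Set (X ⊕ₗ Y)} {x : X} (h : SDB S (toLex (Sum.inl x))) : SDB (pA S) x := by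
  obtain ⟨hx, w, hwS, hwlt, hmax⟩ := h
  rcases w with x' | y'
  · exact ⟨hx, x', hwS, Sum.Lex.inl_lt_inl_iff.mp hwlt, fun z hz hzx =>
      Sum.Lex.inl_le_inl_iff.mp (hmax (toLex (Sum.inl z)) hz (Sum.Lex.inl_lt_inl_iff.mpr hzx))⟩
  · exact absurd hwlt Sum.Lex.not_inr_lt_inl

lemma SUB_inl {S : Set (X ⊕ₗ Y)} {x : X} (h : SUB S (toLex (Sum.inl x))) :
    SUB (pA S) x ∨ ∃ m ∈ pB S, ∀ z ∈ pB S, m ≤ z := by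
  obtain ⟨hx, w, hwS, hwlt, hmin⟩ := h
  rcases w with x' | y'
  · exact Or.inl ⟨hx, x', hwS, Sum.Lex.inl_lt_inl_iff.mp hwlt, fun z hz hzx =>
      Sum.Lex.inl_le_inl_iff.mp (hmin (toLex (Sum.inl z)) hz (Sum.Lex.inl_lt_inl_iff.mpr hzx))⟩
  · exact Or.inr ⟨y', hwS, fun z hz =>
      Sum.Lex.inr_le_inr_iff.mp (hmin (toLex (Sum.inr z)) hz (Sum.Lex.inl_lt_inr _ _))⟩

lemma SUB_inr {S : Set (X ⊕ₗ Y)} {y : Y} (h : SUB S (toLex (Sum.inr y))) : SUB (pB S) y := by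
  obtain ⟨hy, w, hwS, hwlt, hmin⟩ := h
  rcases w with x' | y'
  · exact absurd hwlt Sum.Lex.not_inr_lt_inl
  · exact ⟨hy, y', hwS, Sum.Lex.inr_lt_inr_iff.mp hwlt, fun z hz hzy =>
      Sum.Lex.inr_le_inr_iff.mp (hmin (toLex (Sum.inr z)) hz (Sum.Lex.inr_lt_inr_iff.mpr hzy))⟩

lemma SDB_inr {S : Set (X ⊕ₗ Y)} {y : Y} (h : SDB S (toLex (Sum.inr y))) :
    SDB (pB S) y ∨ ∃ m ∈ pA S, ∀ z ∈ pA S, z ≤ m := by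
  obtain ⟨hy, w, hwS, hwlt, hmax⟩ := h
  rcases w with x' | y'
  · refine Or.inr ⟨x', hwS, fun z hz => ?_⟩
    exact Sum.Lex.inl_le_inl_iff.mp (hmax (toLex (Sum.inl z)) hz (Sum.Lex.inl_lt_inr _ _))
  · exact Or.inl ⟨hy, y', hwS, Sum.Lex.inr_lt_inr_iff.mp hwlt, fun z hz hzy =>
      Sum.Lex.inr_le_inr_iff.mp (hmax (toLex (Sum.inr z)) hz (Sum.Lex.inr_lt_inr_iff.mpr hzy))⟩

lemma pA_diff_inl (S : Set (X ⊕ₗ Y)) (x : X) :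
    pA (S \ {toLex (Sum.inl x)}) = pA S \ {x} := by
  ext a
  simp [pA, Set.mem_diff]

lemma pB_diff_inl (S : Set (X ⊕ₗ Y)) (x : X) :
    pB (S \ {toLex (Sum.inl x)}) = pB S := by
  ext b
  simp [pB, Set.mem_diff]

lemma pA_diff_inr (S : Set (X ⊕ₗ Y)) (y : Y) :
    pA (S \ {toLex (Sum.inr y)}) = pA S := by
  ext a
  simp [pA, Set.mem_diff]

lemma pB_diff_inr (S : Set (X ⊕ₗ Y)) (y : Y) :
    pB (S \ {toLex (Sum.inr y)}) = pB S \ {y} := by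
  ext b
  simp [pB, Set.mem_diff]

lemma pA_lower_inl (S : Set (X ⊕ₗ Y)) (x : X) :
    pA {w | w ∈ S ∧ w < toLex (Sum.inl x)} = {a | a ∈ pA S ∧ a < x} := by
  ext a
  simp only [pA, Set.mem_setOf_eq]
  exact and_congr_right fun _ => Sum.Lex.inl_lt_inl_iff

lemma pB_lower_inl (S : Set (X ⊕ₗ Y)) (x : X) :
    pB {w | w ∈ S ∧ w < toLex (Sum.inl x)} = ∅ := by
  ext b
  simp only [pB, Set.mem_setOf_eq, Set.mem_empty_iff_false, iff_false, not_and]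
  exact fun _ => Sum.Lex.not_inr_lt_inl

lemma pA_upper_inl (S : Set (X ⊕ₗ Y)) (x : X) :
    pA {w | w ∈ S ∧ toLex (Sum.inl x) < w} = {a | a ∈ pA S ∧ x < a} := by
  ext a
  simp only [pA, Set.mem_setOf_eq]
  exact and_congr_right fun _ => Sum.Lex.inl_lt_inl_iff

lemma pB_upper_inl (S : Set (X ⊕ₗ Y)) (x : X) :
    pB {w | w ∈ S ∧ toLex (Sum.inl x) < w} = pB S := by
  ext b
  simp only [pB, Set.mem_setOf_eq]
  exact ⟨fun h => h.1, fun h => ⟨h, Sum.Lex.inl_lt_inr _ _⟩⟩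

lemma pA_lower_inr (S : Set (X ⊕ₗ Y)) (y : Y) :
    pA {w | w ∈ S ∧ w < toLex (Sum.inr y)} = pA S := by
  ext a
  simp only [pA, Set.mem_setOf_eq]
  exact ⟨fun h => h.1, fun h => ⟨h, Sum.Lex.inl_lt_inr _ _⟩⟩

lemma pB_lower_inr (S : Set (X ⊕ₗ Y)) (y : Y) :
    pB {w | w ∈ S ∧ w < toLex (Sum.inr y)} = {b | b ∈ pB S ∧ b < y} := by
  ext b
  simp only [pB, Set.mem_setOf_eq]
  exact and_congr_right fun _ => Sum.Lex.inr_lt_inr_iff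

lemma pA_upper_inr (S : Set (X ⊕ₗ Y)) (y : Y) :
    pA {w | w ∈ S ∧ toLex (Sum.inr y) < w} = ∅ := by
  ext a
  simp only [pA, Set.mem_setOf_eq, Set.mem_empty_iff_false, iff_false, not_and]
  exact fun _ => Sum.Lex.not_inr_lt_inl

lemma pB_upper_inr (S : Set (X ⊕ₗ Y)) (y : Y) :
    pB {w | w ∈ S ∧ toLex (Sum.inr y) < w} = {b | b ∈ pB S ∧ y < b} := by
  ext b
  simp only [pB, Set.mem_setOf_eq]
  exact and_congr_right fun _ => Sum.Lex.inr_lt_inr_iff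

instance lexFinite [Finite X] [Finite Y] : Finite (X ⊕ₗ Y) :=
  inferInstanceAs (Finite (X ⊕ Y))

theorem CC_join_split [Finite X] [Finite Y] :
    ∀ (n : ℕ) (S : Set (X ⊕ₗ Y)), S.ncard ≤ n → (pA S).Nonempty → (pB S).Nonempty →
      CC ↥S → CC ↥(pA S) ∨ CC ↥(pB S) := by
  intro n
  induction n with
  | zero =>
    intro S hcard hA _ _
    obtain ⟨a, ha⟩ := hA
    rw [Nat.le_zero, Set.ncard_eq_zero (Set.toFinite S)] at hcard
    exact absurd hcard (Set.nonempty_iff_ne_empty.mp ⟨_, ha⟩)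
  | succ n ih =>
    intro S hcard hA hB hCC
    obtain ⟨a, haA⟩ := hA
    obtain ⟨b, hbB⟩ := hB
    by_cases hsA : ∀ a' ∈ pA S, a' = a
    · refine Or.inl (CC_of_top (⟨a, haA⟩ : ↥(pA S)) fun w => ?_)
      exact le_of_eq (Subtype.ext (hsA w.val w.prop))
    by_cases hsB : ∀ b' ∈ pB S, b' = b
    · refine Or.inr (CC_of_top (⟨b, hbB⟩ : ↥(pB S)) fun w => ?_)
      exact le_of_eq (Subtype.ext (hsB w.val w.prop))
    push_neg at hsA
    obtain ⟨a2, ha2A, ha2⟩ := hsA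
    have hdist : (toLex (Sum.inl a) : X ⊕ₗ Y) ≠ toLex (Sum.inr b) := by simp
    obtain ⟨z, hbeat⟩ := exists_sbeat hCC ⟨_, haA, _, hbB, hdist⟩
    rcases z with x | y
    · have hbeat' : SDB S (toLex (Sum.inl x)) ∨ SUB S (toLex (Sum.inl x)) := hbeat
      have hbA : (SDB (pA S) x ∨ SUB (pA S) x) ∨ ∃ m ∈ pB S, ∀ z ∈ pB S, m ≤ z := by
        rcases hbeat' with h | h
        · exact Or.inl (Or.inl (SDB_inl h))
        · rcases SUB_inl h with h' | h'
          · exact Or.inl (Or.inr h')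
          · exact Or.inr h'
      rcases hbA with hbA | ⟨m, hm, hmin⟩
      swap
      · exact Or.inr (CC_of_bot (⟨m, hm⟩ : ↥(pB S)) fun w => hmin w.val w.prop)
      have hxA : x ∈ pA S := by rcases hbA with h | h <;> exact h.1
      have hA' : (pA (S \ {toLex (Sum.inl x)})).Nonempty := by
        rw [pA_diff_inl]
        rcases eq_or_ne a x with rfl | h
        · exact ⟨a2, ha2A, ha2⟩
        · exact ⟨a, haA, h⟩
      have hB' : (pB (S \ {toLex (Sum.inl x)})).Nonempty := by
        rw [pB_diff_inl]
        exact ⟨b, hbB⟩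
      have hcard' : (S \ {toLex (Sum.inl x)}).ncard ≤ n := by
        have := Set.ncard_diff_singleton_lt_of_mem (show toLex (Sum.inl x) ∈ S from hxA)
          (Set.toFinite S)
        omega
      have hCC' : CC ↥(S \ {toLex (Sum.inl x)}) := (CC_diff_iff hbeat').mp hCC
      rcases ih _ hcard' hA' hB' hCC' with h | h
      · rw [pA_diff_inl] at h
        exact Or.inl ((CC_diff_iff hbA).mpr h)
      · rw [pB_diff_inl] at h
        exact Or.inr h
    · have hbeat' : SDB S (toLex (Sum.inr y)) ∨ SUB S (toLex (Sum.inr y)) := hbeat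
      have hbB2 : (SDB (pB S) y ∨ SUB (pB S) y) ∨ ∃ m ∈ pA S, ∀ z ∈ pA S, z ≤ m := by
        rcases hbeat' with h | h
        · rcases SDB_inr h with h' | h'
          · exact Or.inl (Or.inl h')
          · exact Or.inr h'
        · exact Or.inl (Or.inr (SUB_inr h))
      rcases hbB2 with hbB2 | ⟨m, hm, hmax⟩
      swap
      · exact Or.inl (CC_of_top (⟨m, hm⟩ : ↥(pA S)) fun w => hmax w.val w.prop)
      have hyB : y ∈ pB S := by rcases hbB2 with h | h <;> exact h.1
      push_neg at hsB
      obtain ⟨b2, hb2B, hb2⟩ := hsB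
      have hA' : (pA (S \ {toLex (Sum.inr y)})).Nonempty := by
        rw [pA_diff_inr]
        exact ⟨a, haA⟩
      have hB' : (pB (S \ {toLex (Sum.inr y)})).Nonempty := by
        rw [pB_diff_inr]
        rcases eq_or_ne b y with rfl | h
        · exact ⟨b2, hb2B, hb2⟩
        · exact ⟨b, hbB, h⟩
      have hcard' : (S \ {toLex (Sum.inr y)}).ncard ≤ n := by
        have := Set.ncard_diff_singleton_lt_of_mem (show toLex (Sum.inr y) ∈ S from hyB)
          (Set.toFinite S)
        omega
      have hCC' : CC ↥(S \ {toLex (Sum.inr y)}) := (CC_diff_iff hbeat').mp hCC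
      rcases ih _ hcard' hA' hB' hCC' with h | h
      · rw [pA_diff_inr] at h
        exact Or.inl h
      · rw [pB_diff_inr] at h
        exact Or.inr ((CC_diff_iff hbB2).mpr h)

lemma weak_inl [Finite X] [Finite Y] {S : Set (X ⊕ₗ Y)} {x : X}
    (h : IsWeakPointIn S (toLex (Sum.inl x))) (hB : (pB S).Nonempty) :
    IsWeakPointIn (pA S) x ∨ CC ↥(pB S) := by
  obtain ⟨hxS, hc⟩ := h
  rcases hc with hc | hc
  · rw [subContr_iff_CC] at hc
    have h1 : CC ↥(pA {w | w ∈ S ∧ w < toLex (Sum.inl x)}) :=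
      CC_iso (isoPA _ (pB_lower_inl S x)).symm hc
    rw [pA_lower_inl] at h1
    exact Or.inl ⟨hxS, Or.inl (by rw [subContr_iff_CC]; exact h1)⟩
  · rw [subContr_iff_CC] at hc
    by_cases hup : ({a | a ∈ pA S ∧ x < a}).Nonempty
    · have hA' : (pA {w | w ∈ S ∧ toLex (Sum.inl x) < w}).Nonempty := by
        rw [pA_upper_inl]; exact hup
      have hB' : (pB {w | w ∈ S ∧ toLex (Sum.inl x) < w}).Nonempty := by
        rw [pB_upper_inl]; exact hB
      rcases CC_join_split _ _ le_rfl hA' hB' hc with h1 | h1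
      · rw [pA_upper_inl] at h1
        exact Or.inl ⟨hxS, Or.inr (by rw [subContr_iff_CC]; exact h1)⟩
      · rw [pB_upper_inl] at h1
        exact Or.inr h1
    · have hempty : pA {w | w ∈ S ∧ toLex (Sum.inl x) < w} = ∅ := by
        rw [pA_upper_inl]
        exact Set.not_nonempty_iff_eq_empty.mp hup
      have h1 : CC ↥(pB {w | w ∈ S ∧ toLex (Sum.inl x) < w}) :=
        CC_iso (isoPB _ hempty).symm hc
      rw [pB_upper_inl] at h1
      exact Or.inr h1

lemma weak_inr [Finite X] [Finite Y] {S : Set (X ⊕ₗ Y)} {y : Y}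
    (h : IsWeakPointIn S (toLex (Sum.inr y))) (hA : (pA S).Nonempty) :
    IsWeakPointIn (pB S) y ∨ CC ↥(pA S) := by
  obtain ⟨hyS, hc⟩ := h
  rcases hc with hc | hc
  · rw [subContr_iff_CC] at hc
    by_cases hlow : ({b | b ∈ pB S ∧ b < y}).Nonempty
    · have hA' : (pA {w | w ∈ S ∧ w < toLex (Sum.inr y)}).Nonempty := by
        rw [pA_lower_inr]; exact hA
      have hB' : (pB {w | w ∈ S ∧ w < toLex (Sum.inr y)}).Nonempty := by
        rw [pB_lower_inr]; exact hlow
      rcases CC_join_split _ _ le_rfl hA' hB' hc with h1 | h1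
      · rw [pA_lower_inr] at h1
        exact Or.inr h1
      · rw [pB_lower_inr] at h1
        exact Or.inl ⟨hyS, Or.inl (by rw [subContr_iff_CC]; exact h1)⟩
    · have hempty : pB {w | w ∈ S ∧ w < toLex (Sum.inr y)} = ∅ := by
        rw [pB_lower_inr]
        exact Set.not_nonempty_iff_eq_empty.mp hlow
      have h1 : CC ↥(pA {w | w ∈ S ∧ w < toLex (Sum.inr y)}) :=
        CC_iso (isoPA _ hempty).symm hc
      rw [pA_lower_inr] at h1
      exact Or.inr h1
  · rw [subContr_iff_CC] at hc
    have h1 : CC ↥(pB {w | w ∈ S ∧ toLex (Sum.inr y) < w}) :=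
      CC_iso (isoPB _ (pA_upper_inr S y)).symm hc
    rw [pB_upper_inr] at h1
    exact Or.inl ⟨hyS, Or.inr (by rw [subContr_iff_CC]; exact h1)⟩

theorem fwd_main [Finite X] [Finite Y] {p : X ⊕ₗ Y} :
    ∀ S : Set (X ⊕ₗ Y), SpaceCollapses S {p} → (pA S).Nonempty → (pB S).Nonempty →
      SpaceCollapsible (pA S) ∨ SpaceCollapsible (pB S) := by
  intro S h
  induction h using Relation.ReflTransGen.head_induction_on with
  | refl =>
    intro hA hB
    obtain ⟨a0, ha0⟩ := hA
    obtain ⟨b0, hb0⟩ := hB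
    have e1 : toLex (Sum.inl a0) = p := ha0
    have e2 : toLex (Sum.inr b0) = p := hb0
    rw [← e2] at e1
    simp at e1
  | @head T T' hstep _htail ih =>
    intro hA hB
    obtain ⟨z, hweak, rfl⟩ := hstep
    rcases z with x | y
    · have hweak' : IsWeakPointIn T (toLex (Sum.inl x)) := hweak
      rcases weak_inl hweak' hB with hwx | hCB
      swap
      · exact Or.inr (CC_spaceCollapsible hB hCB)
      have ih' : (pA (T \ {toLex (Sum.inl x)})).Nonempty →
          (pB (T \ {toLex (Sum.inl x)})).Nonempty →
          SpaceCollapsible (pA (T \ {toLex (Sum.inl x)})) ∨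
            SpaceCollapsible (pB (T \ {toLex (Sum.inl x)})) := ih
      by_cases hA' : (pA T \ {x}).Nonempty
      · have hA'' := hA'
        rw [← pA_diff_inl] at hA''
        have hB'' := hB
        rw [← pB_diff_inl _ x] at hB''
        rcases ih' hA'' hB'' with h1 | h1
        · rw [pA_diff_inl] at h1
          obtain ⟨c0, hc0, hcoll⟩ := h1
          exact Or.inl ⟨c0, hc0.1, Relation.ReflTransGen.head ⟨x, hwx, rfl⟩ hcoll⟩
        · rw [pB_diff_inl] at h1
          exact Or.inr h1
      · have hxA : x ∈ pA T := hwx.1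
        have hsingle : pA T = {x} := by
          rw [Set.not_nonempty_iff_eq_empty, Set.diff_eq_empty] at hA'
          exact Set.eq_singleton_iff_unique_mem.mpr ⟨hxA, fun b hb => hA' hb⟩
        exact Or.inl ⟨x, hxA, by rw [hsingle]; exact Relation.ReflTransGen.refl⟩
    · have hweak' : IsWeakPointIn T (toLex (Sum.inr y)) := hweak
      rcases weak_inr hweak' hA with hwy | hCA
      swap
      · exact Or.inl (CC_spaceCollapsible hA hCA)
      have ih' : (pA (T \ {toLex (Sum.inr y)})).Nonempty →
          (pB (T \ {toLex (Sum.inr y)})).Nonempty →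
          SpaceCollapsible (pA (T \ {toLex (Sum.inr y)})) ∨
            SpaceCollapsible (pB (T \ {toLex (Sum.inr y)})) := ih
      by_cases hB' : (pB T \ {y}).Nonempty
      · have hB'' := hB'
        rw [← pB_diff_inr] at hB''
        have hA'' := hA
        rw [← pA_diff_inr _ y] at hA''
        rcases ih' hA'' hB'' with h1 | h1
        · rw [pA_diff_inr] at h1
          exact Or.inl h1
        · rw [pB_diff_inr] at h1
          obtain ⟨c0, hc0, hcoll⟩ := h1
          exact Or.inr ⟨c0, hc0.1, Relation.ReflTransGen.head ⟨y, hwy, rfl⟩ hcoll⟩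
      · have hyB : y ∈ pB T := hwy.1
        have hsingle : pB T = {y} := by
          rw [Set.not_nonempty_iff_eq_empty, Set.diff_eq_empty] at hB'
          exact Set.eq_singleton_iff_unique_mem.mpr ⟨hyB, fun b hb => hB' hb⟩
        exact Or.inr ⟨y, hyB, by rw [hsingle]; exact Relation.ReflTransGen.refl⟩

/-- the join of two subsets -/
def FJ (A : Set X) (B : Set Y) : Set (X ⊕ₗ Y) :=
  {w | lexCases (C := fun _ => Prop) (fun x => x ∈ A) (fun y => y ∈ B) w}

lemma mem_FJ_inl {A : Set X} {B : Set Y} {x : X} :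
    toLex (Sum.inl x) ∈ FJ A B ↔ x ∈ A := Iff.rfl

lemma mem_FJ_inr {A : Set X} {B : Set Y} {y : Y} :
    toLex (Sum.inr y) ∈ FJ A B ↔ y ∈ B := Iff.rfl

lemma pA_FJ (A : Set X) (B : Set Y) : pA (FJ A B) = A := rfl

lemma pB_FJ (A : Set X) (B : Set Y) : pB (FJ A B) = B := rfl

lemma FJ_univ : FJ (Set.univ : Set X) (Set.univ : Set Y) = Set.univ := by
  ext w
  simp only [Set.mem_univ, iff_true]
  rcases w with x | y
  · exact Set.mem_univ x
  · exact Set.mem_univ y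

lemma inl_eq_inl_iff {a x : X} : (toLex (Sum.inl a) : X ⊕ₗ Y) = toLex (Sum.inl x) ↔ a = x := by
  simp

lemma inr_eq_inr_iff {b y : Y} : (toLex (Sum.inr b) : X ⊕ₗ Y) = toLex (Sum.inr y) ↔ b = y := by
  simp

lemma inr_ne_inl' {b : Y} {x : X} : (toLex (Sum.inr b) : X ⊕ₗ Y) ≠ toLex (Sum.inl x) := by
  simp

lemma inl_ne_inr' {a : X} {y : Y} : (toLex (Sum.inl a) : X ⊕ₗ Y) ≠ toLex (Sum.inr y) := by
  simp

lemma FJ_diff_inl (A : Set X) (B : Set Y) (x : X) :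
    FJ (A \ {x}) B = FJ A B \ {toLex (Sum.inl x)} := by
  ext w
  rcases w with a | b
  · show a ∈ A ∧ ¬ a = x ↔ a ∈ A ∧ ¬ (toLex (Sum.inl a) : X ⊕ₗ Y) = toLex (Sum.inl x)
    rw [inl_eq_inl_iff]
  · show b ∈ B ↔ b ∈ B ∧ ¬ (toLex (Sum.inr b) : X ⊕ₗ Y) = toLex (Sum.inl x)
    exact ⟨fun h => ⟨h, inr_ne_inl'⟩, fun h => h.1⟩

lemma FJ_diff_inr (A : Set X) (B : Set Y) (y : Y) :
    FJ A (B \ {y}) = FJ A B \ {toLex (Sum.inr y)} := by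
  ext w
  rcases w with a | b
  · show a ∈ A ↔ a ∈ A ∧ ¬ (toLex (Sum.inl a) : X ⊕ₗ Y) = toLex (Sum.inr y)
    exact ⟨fun h => ⟨h, inl_ne_inr'⟩, fun h => h.1⟩
  · show b ∈ B ∧ ¬ b = y ↔ b ∈ B ∧ ¬ (toLex (Sum.inr b) : X ⊕ₗ Y) = toLex (Sum.inr y)
    rw [inr_eq_inr_iff]

lemma FJ_singleton_inl (x0 : X) :
    FJ ({x0} : Set X) (∅ : Set Y) = {toLex (Sum.inl x0)} := by
  ext w
  rcases w with a | b
  · show a = x0 ↔ (toLex (Sum.inl a) : X ⊕ₗ Y) = toLex (Sum.inl x0)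
    rw [inl_eq_inl_iff]
  · show b ∈ (∅ : Set Y) ↔ (toLex (Sum.inr b) : X ⊕ₗ Y) = toLex (Sum.inl x0)
    simp only [Set.mem_empty_iff_false, false_iff]
    exact inr_ne_inl'

lemma FJ_singleton_inr (y0 : Y) :
    FJ (∅ : Set X) ({y0} : Set Y) = {toLex (Sum.inr y0)} := by
  ext w
  rcases w with a | b
  · show a ∈ (∅ : Set X) ↔ (toLex (Sum.inl a) : X ⊕ₗ Y) = toLex (Sum.inr y0)
    simp only [Set.mem_empty_iff_false, false_iff]
    exact inl_ne_inr'
  · show b = y0 ↔ (toLex (Sum.inr b) : X ⊕ₗ Y) = toLex (Sum.inr y0)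
    rw [inr_eq_inr_iff]

lemma stepX [Finite X] [Finite Y] {A A' : Set X} (h : ElemSpaceCollapse A A') :
    ElemSpaceCollapse (FJ A (Set.univ : Set Y)) (FJ A' Set.univ) := by
  obtain ⟨x, ⟨hxA, hc⟩, rfl⟩ := h
  refine ⟨toLex (Sum.inl x), ⟨hxA, ?_⟩, by rw [FJ_diff_inl]⟩
  rcases hc with hc | hc
  · refine Or.inl ?_
    rw [subContr_iff_CC] at hc ⊢
    have hpB : pB {w | w ∈ FJ A (Set.univ : Set Y) ∧ w < toLex (Sum.inl x)} = ∅ :=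
      pB_lower_inl _ x
    refine CC_iso (isoPA _ hpB) ?_
    rw [pA_lower_inl, pA_FJ]
    exact hc
  · refine Or.inr ?_
    rw [subContr_iff_CC] at hc ⊢
    refine CC_of_pA ?_
    rw [pA_upper_inl, pA_FJ]
    exact hc

lemma stepY [Finite X] [Finite Y] {B B' : Set Y} (h : ElemSpaceCollapse B B') :
    ElemSpaceCollapse (FJ (Set.univ : Set X) B) (FJ Set.univ B') := by
  obtain ⟨y, ⟨hyB, hc⟩, rfl⟩ := h
  refine ⟨toLex (Sum.inr y), ⟨hyB, ?_⟩, by rw [FJ_diff_inr]⟩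
  rcases hc with hc | hc
  · refine Or.inl ?_
    rw [subContr_iff_CC] at hc ⊢
    refine CC_of_pB ?_
    rw [pB_lower_inr, pB_FJ]
    exact hc
  · refine Or.inr ?_
    rw [subContr_iff_CC] at hc ⊢
    have hpA : pA {w | w ∈ FJ (Set.univ : Set X) B ∧ toLex (Sum.inr y) < w} = ∅ :=
      pA_upper_inr _ y
    refine CC_iso (isoPB _ hpA) ?_
    rw [pB_upper_inr, pB_FJ]
    exact hc

/-- collapse away the Y-part over a single point of X -/
lemma finishX [Finite X] [Finite Y] (x0 : X) :
    ∀ (n : ℕ) (B : Set Y), B.ncard ≤ n →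
      SpaceCollapses (FJ ({x0} : Set X) B) {toLex (Sum.inl x0)} := by
  intro n
  induction n with
  | zero =>
    intro B hcard
    rw [Nat.le_zero, Set.ncard_eq_zero (Set.toFinite B)] at hcard
    rw [hcard, FJ_singleton_inl]
    exact Relation.ReflTransGen.refl
  | succ n ih =>
    intro B hcard
    rcases Set.eq_empty_or_nonempty B with rfl | ⟨y, hy⟩
    · rw [FJ_singleton_inl]
      exact Relation.ReflTransGen.refl
    · have hweak : IsWeakPointIn (FJ ({x0} : Set X) B) (toLex (Sum.inr y)) := by
        refine ⟨hy, Or.inl ?_⟩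
        rw [subContr_iff_CC]
        refine CC_of_bot ⟨toLex (Sum.inl x0), ⟨rfl, Sum.Lex.inl_lt_inr _ _⟩⟩ ?_
        rintro ⟨w, hw⟩
        rcases w with a | b
        · have ha : a = x0 := hw.1
          subst ha
          exact le_of_eq (Subtype.ext rfl)
        · exact Sum.Lex.inl_le_inr _ _
      have hstep : ElemSpaceCollapse (FJ ({x0} : Set X) B) (FJ ({x0} : Set X) (B \ {y})) :=
        ⟨toLex (Sum.inr y), hweak, by rw [FJ_diff_inr]⟩
      have hcard' : (B \ {y}).ncard ≤ n := by
        have := Set.ncard_diff_singleton_lt_of_mem hy (Set.toFinite B)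
        omega
      exact Relation.ReflTransGen.head hstep (ih _ hcard')

/-- collapse away the X-part under a single point of Y -/
lemma finishY [Finite X] [Finite Y] (y0 : Y) :
    ∀ (n : ℕ) (A : Set X), A.ncard ≤ n →
      SpaceCollapses (FJ A ({y0} : Set Y)) {toLex (Sum.inr y0)} := by
  intro n
  induction n with
  | zero =>
    intro A hcard
    rw [Nat.le_zero, Set.ncard_eq_zero (Set.toFinite A)] at hcard
    rw [hcard, FJ_singleton_inr]
    exact Relation.ReflTransGen.refl
  | succ n ih =>
    intro A hcard
    rcases Set.eq_empty_or_nonempty A with rfl | ⟨x, hx⟩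
    · rw [FJ_singleton_inr]
      exact Relation.ReflTransGen.refl
    · have hweak : IsWeakPointIn (FJ A ({y0} : Set Y)) (toLex (Sum.inl x)) := by
        refine ⟨hx, Or.inr ?_⟩
        rw [subContr_iff_CC]
        refine CC_of_top ⟨toLex (Sum.inr y0), ⟨rfl, Sum.Lex.inl_lt_inr _ _⟩⟩ ?_
        rintro ⟨w, hw⟩
        rcases w with a | b
        · exact Sum.Lex.inl_le_inr _ _
        · have hb : b = y0 := hw.1
          subst hb
          exact le_of_eq (Subtype.ext rfl)
      have hstep : ElemSpaceCollapse (FJ A ({y0} : Set Y)) (FJ (A \ {x}) ({y0} : Set Y)) :=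
        ⟨toLex (Sum.inl x), hweak, by rw [FJ_diff_inl]⟩
      have hcard' : (A \ {x}).ncard ≤ n := by
        have := Set.ncard_diff_singleton_lt_of_mem hx (Set.toFinite A)
        omega
      exact Relation.ReflTransGen.head hstep (ih _ hcard')

lemma bwd_X [Finite X] [Finite Y] (h : SpaceCollapsible (Set.univ : Set X)) :
    SpaceCollapsible (Set.univ : Set (X ⊕ₗ Y)) := by
  obtain ⟨x0, _, hcol⟩ := h
  have hlift : SpaceCollapses (FJ (Set.univ : Set X) (Set.univ : Set Y))
      (FJ ({x0} : Set X) Set.univ) :=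
    Relation.ReflTransGen.lift (fun A => FJ A (Set.univ : Set Y)) (fun _ _ hs => stepX hs) _ _ hcol
  refine ⟨toLex (Sum.inl x0), Set.mem_univ _, ?_⟩
  rw [← FJ_univ]
  exact hlift.trans (finishX x0 _ Set.univ le_rfl)

lemma bwd_Y [Finite X] [Finite Y] (h : SpaceCollapsible (Set.univ : Set Y)) :
    SpaceCollapsible (Set.univ : Set (X ⊕ₗ Y)) := by
  obtain ⟨y0, _, hcol⟩ := h
  have hlift : SpaceCollapses (FJ (Set.univ : Set X) (Set.univ : Set Y))
      (FJ Set.univ ({y0} : Set Y)) :=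
    Relation.ReflTransGen.lift (fun B => FJ (Set.univ : Set X) B) (fun _ _ hs => stepY hs) _ _ hcol
  refine ⟨toLex (Sum.inr y0), Set.mem_univ _, ?_⟩
  rw [← FJ_univ]
  exact hlift.trans (finishY y0 _ Set.univ le_rfl)

end JoinPart

theorem join_collapsible_iff (X Y : Type) [PartialOrder X] [Fintype X]
    [PartialOrder Y] [Fintype Y] [Nonempty X] [Nonempty Y] :
    SpaceCollapsible (Set.univ : Set (X ⊕ₗ Y)) ↔
      SpaceCollapsible (Set.univ : Set X) ∨ SpaceCollapsible (Set.univ : Set Y) := by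
  constructor
  · rintro ⟨p, -, hcol⟩
    have hA : (pA (Set.univ : Set (X ⊕ₗ Y))).Nonempty :=
      ⟨Classical.arbitrary X, Set.mem_univ _⟩
    have hB : (pB (Set.univ : Set (X ⊕ₗ Y))).Nonempty :=
      ⟨Classical.arbitrary Y, Set.mem_univ _⟩
    have e1 : pA (Set.univ : Set (X ⊕ₗ Y)) = Set.univ := by ext a; simp [pA]
    have e2 : pB (Set.univ : Set (X ⊕ₗ Y)) = Set.univ := by ext b; simp [pB]
    have hmain := fwd_main Set.univ hcol hA hB
    rwa [e1, e2] at hmain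
  · rintro (h | h)
    · exact bwd_X h
    · exact bwd_Y h
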